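/- arXiv:1710.02698 — 4 statements merged into one kernel-verified Lean document; each statement's English description precedes it below -/
import Mathlib

section
/- A monic polynomial L of degree n with real coefficients is the n-th monic Sobolev extremal polynomial with respect to ‖·‖_{S,p,m} if and only if ∑_{k=0}^{m} ∫ Q^{(k)}(x)·sgn(L^{(k)}(x))·|L^{(k)}(x)|^{p−1} dμ_k(x) = 0 for every real polynomial Q of degree at most n − 1. -/
open MeasureTheory Polynomial Set

/-- The (topological) support of a Borel measure on `ℝ`. -/
def msupport (μ : Measure ℝ) : Set ℝ :=
  {x : ℝ | ∀ U : Set ℝ, IsOpen U → x ∈ U → 0 < μ U}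

/-- The Sobolev `p`-norm `‖f‖_{S,p,m} = (∑_{k=0}^m ∫ |f^{(k)}|^p dμ_k)^(1/p)` of a polynomial. -/
noncomputable def sobNormM (p : ℝ) (m : ℕ) (μ : ℕ → Measure ℝ) (f : Polynomial ℝ) : ℝ :=
  (∑ k ∈ Finset.range (m + 1), ∫ x, |(derivative^[k] f).eval x| ^ p ∂(μ k)) ^ (1 / p)

/-- `L` is the `n`-th monic Sobolev extremal polynomial with respect to `‖·‖_{S,p,m}`. -/
def IsExtremalM (p : ℝ) (m : ℕ) (μ : ℕ → Measure ℝ) (n : ℕ) (L : Polynomial ℝ) : Prop :=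
  L.Monic ∧ L.natDegree = n ∧
    ∀ Q : Polynomial ℝ, Q.Monic → Q.natDegree = n →
      sobNormM p m μ L ≤ sobNormM p m μ Q

lemma msupport_compl_null (μ : Measure ℝ) : μ (msupport μ)ᶜ = 0 := by
  set S : Set (Set ℝ) := {U | IsOpen U ∧ μ U = 0} with hS
  have hsub : (msupport μ)ᶜ ⊆ ⋃₀ S := by
    intro x hx
    simp only [msupport, mem_compl_iff, mem_setOf_eq, not_forall] at hx
    obtain ⟨U, hU, hxU, hμ⟩ := hx
    exact ⟨U, ⟨hU, le_antisymm (not_lt.1 hμ) zero_le⟩, hxU⟩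
  obtain ⟨T, hTc, hTS, hTU⟩ := TopologicalSpace.isOpen_sUnion_countable S (fun U hU => hU.1)
  refine measure_mono_null hsub ?_
  rw [← hTU]
  exact (measure_sUnion_null_iff hTc).2 fun U hU => (hTS hU).2

lemma ae_mem_msupport (μ : Measure ℝ) : ∀ᵐ x ∂μ, x ∈ msupport μ := by
  rw [ae_iff]; exact msupport_compl_null μ

lemma measurable_realSign : Measurable Real.sign := by
  have : Real.sign = fun r : ℝ => if r < 0 then (-1 : ℝ) else if 0 < r then 1 else 0 := by
    funext r; rfl
  rw [this]
  exact Measurable.ite (measurableSet_lt measurable_id measurable_const) measurable_const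
    (Measurable.ite (measurableSet_lt measurable_const measurable_id)
      measurable_const measurable_const)

lemma abs_realSign_le (r : ℝ) : |Real.sign r| ≤ 1 := by
  rcases Real.sign_apply_eq r with h | h | h <;> rw [h] <;> norm_num

lemma integrable_of_bound (μ : Measure ℝ) [IsFiniteMeasure μ]
    {g : ℝ → ℝ} (hmeas : AEStronglyMeasurable g μ) (C : ℝ)
    (hb : ∀ x ∈ msupport μ, |g x| ≤ C) : Integrable g μ := by
  refine Integrable.mono' (integrable_const C) hmeas ?_
  exact (ae_mem_msupport μ).mono fun x hx => by simpa [Real.norm_eq_abs] using hb x hx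

lemma integrable_continuous (μ : Measure ℝ) [IsFiniteMeasure μ]
    (hc : IsCompact (msupport μ)) {g : ℝ → ℝ} (hg : Continuous g) : Integrable g μ := by
  obtain ⟨C, hC⟩ := hc.exists_bound_of_continuousOn hg.continuousOn
  exact integrable_of_bound μ hg.aestronglyMeasurable C
    (fun x hx => by simpa [Real.norm_eq_abs] using hC x hx)

lemma continuous_abs_rpow {p : ℝ} (hp : 0 < p) : Continuous fun y : ℝ => |y| ^ p := by
  rw [continuous_iff_continuousAt]
  intro y
  exact (Real.continuousAt_rpow_const _ _ (Or.inr hp.le)).comp continuous_abs.continuousAt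

lemma hasDerivAt_abs_rpow_sign {p : ℝ} (hp : 1 < p) (y : ℝ) :
    HasDerivAt (fun z : ℝ => |z| ^ p) (p * Real.sign y * |y| ^ (p - 1)) y := by
  have h := hasDerivAt_abs_rpow y hp
  convert h using 1
  rcases lt_trichotomy y 0 with hy | rfl | hy
  · rw [Real.sign_of_neg hy]
    have hy' : (0:ℝ) < |y| := abs_pos.2 hy.ne
    have : |y| ^ (p - 1) = |y| ^ (p - 2) * |y| := by
      rw [show p - 1 = (p - 2) + 1 by ring, Real.rpow_add hy', Real.rpow_one]
    rw [this, abs_of_neg hy]; ring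
  · simp [Real.zero_rpow (by linarith : p - 1 ≠ 0)]
  · rw [Real.sign_of_pos hy]
    have hy' : (0:ℝ) < |y| := abs_pos.2 hy.ne'
    have : |y| ^ (p - 1) = |y| ^ (p - 2) * |y| := by
      rw [show p - 1 = (p - 2) + 1 by ring, Real.rpow_add hy', Real.rpow_one]
    rw [this, abs_of_pos hy]; ring

lemma sign_abs_rpow_mono {p : ℝ} (hp : 1 < p) :
    Monotone fun y : ℝ => Real.sign y * |y| ^ (p - 1) := by
  intro a b hab
  dsimp only
  rcases lt_trichotomy a 0 with ha | rfl | ha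
  · rcases lt_trichotomy b 0 with hb | rfl | hb
    · rw [Real.sign_of_neg ha, Real.sign_of_neg hb, abs_of_neg ha, abs_of_neg hb]
      simp only [neg_one_mul, neg_le_neg_iff]
      exact Real.rpow_le_rpow (by linarith) (by linarith) (by linarith)
    · rw [Real.sign_of_neg ha, Real.sign_zero]
      nlinarith [Real.rpow_nonneg (abs_nonneg a) (p - 1)]
    · rw [Real.sign_of_neg ha, Real.sign_of_pos hb]
      nlinarith [Real.rpow_nonneg (abs_nonneg a) (p - 1),
        Real.rpow_nonneg (abs_nonneg b) (p - 1)]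
  · rw [Real.sign_zero, zero_mul]
    rcases eq_or_lt_of_le hab with rfl | hb
    · simp
    · rw [Real.sign_of_pos hb]
      positivity
  · have hb : 0 < b := lt_of_lt_of_le ha hab
    rw [Real.sign_of_pos ha, Real.sign_of_pos hb, abs_of_pos ha, abs_of_pos hb, one_mul, one_mul]
    exact Real.rpow_le_rpow ha.le hab (by linarith)

/-- The key convexity inequality. -/
lemma abs_rpow_convex_ineq {p : ℝ} (hp : 1 < p) (a b : ℝ) :
    |a| ^ p + p * Real.sign a * |a| ^ (p - 1) * (b - a) ≤ |b| ^ p := by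
  have hp0 : (0:ℝ) < p := by linarith
  have hderiv : ∀ c y : ℝ,
      HasDerivAt (fun y : ℝ => |y| ^ p - p * (Real.sign c * |c| ^ (p - 1)) * y)
        (p * (Real.sign y * |y| ^ (p - 1)) - p * (Real.sign c * |c| ^ (p - 1))) y := by
    intro c y
    have h1 := hasDerivAt_abs_rpow_sign hp y
    have h2 : HasDerivAt (fun y : ℝ => p * (Real.sign c * |c| ^ (p - 1)) * y)
        (p * (Real.sign c * |c| ^ (p - 1))) y := by
      simpa using (hasDerivAt_id y).const_mul (p * (Real.sign c * |c| ^ (p - 1)))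
    have := h1.fun_sub h2
    rw [show p * (Real.sign y * |y| ^ (p - 1)) = p * Real.sign y * |y| ^ (p - 1) by ring]
    exact this
  have hcont : Continuous fun y : ℝ => |y| ^ p - p * (Real.sign a * |a| ^ (p - 1)) * y :=
    (continuous_abs_rpow hp0).sub (continuous_const.mul continuous_id)
  have hmain : |a| ^ p - p * (Real.sign a * |a| ^ (p - 1)) * a ≤
      |b| ^ p - p * (Real.sign a * |a| ^ (p - 1)) * b := by
    rcases le_total a b with hab | hab
    · have hmono : MonotoneOn (fun y : ℝ => |y| ^ p - p * (Real.sign a * |a| ^ (p - 1)) * y)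
          (Icc a b) := by
        apply monotoneOn_of_deriv_nonneg (convex_Icc a b) hcont.continuousOn
        · intro y hy
          exact (hderiv a y).differentiableAt.differentiableWithinAt
        · intro y hy
          rw [interior_Icc] at hy
          rw [(hderiv a y).deriv]
          have h1 : Real.sign a * |a| ^ (p - 1) ≤ Real.sign y * |y| ^ (p - 1) :=
            sign_abs_rpow_mono hp (le_of_lt hy.1)
          nlinarith [mul_le_mul_of_nonneg_left h1 hp0.le]
      exact hmono (left_mem_Icc.2 hab) (right_mem_Icc.2 hab) hab
    · have hmono : AntitoneOn (fun y : ℝ => |y| ^ p - p * (Real.sign a * |a| ^ (p - 1)) * y)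
          (Icc b a) := by
        apply antitoneOn_of_deriv_nonpos (convex_Icc b a) hcont.continuousOn
        · intro y hy
          exact (hderiv a y).differentiableAt.differentiableWithinAt
        · intro y hy
          rw [interior_Icc] at hy
          rw [(hderiv a y).deriv]
          have h1 : Real.sign y * |y| ^ (p - 1) ≤ Real.sign a * |a| ^ (p - 1) :=
            sign_abs_rpow_mono hp (le_of_lt hy.2)
          nlinarith [mul_le_mul_of_nonneg_left h1 hp0.le]
      exact hmono (left_mem_Icc.2 hab) (right_mem_Icc.2 hab) hab
  nlinarith [hmain]

lemma integrable_sign_term (μ : Measure ℝ) [IsFiniteMeasure μ] (hc : IsCompact (msupport μ))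
    {p : ℝ} (hp : 1 < p) {f g : ℝ → ℝ} (hf : Continuous f) (hg : Continuous g) :
    Integrable (fun x => f x * Real.sign (g x) * |g x| ^ (p - 1)) μ := by
  have hp1 : (0:ℝ) < p - 1 := by linarith
  have hmeas : AEStronglyMeasurable (fun x => f x * Real.sign (g x) * |g x| ^ (p - 1)) μ := by
    exact ((hf.measurable.mul (measurable_realSign.comp hg.measurable)).mul
      ((continuous_abs_rpow hp1).comp hg).measurable).aestronglyMeasurable
  have hB : Continuous fun x => |f x| * |g x| ^ (p - 1) :=
    hf.abs.mul ((continuous_abs_rpow hp1).comp hg)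
  obtain ⟨C, hC⟩ := hc.exists_bound_of_continuousOn hB.continuousOn
  refine integrable_of_bound μ hmeas C fun x hx => ?_
  have h1 : |f x * Real.sign (g x) * |g x| ^ (p - 1)| ≤ |f x| * |g x| ^ (p - 1) := by
    rw [abs_mul, abs_mul, abs_of_nonneg (Real.rpow_nonneg (abs_nonneg _) _)]
    have := abs_realSign_le (g x)
    nlinarith [abs_nonneg (f x), Real.rpow_nonneg (abs_nonneg (g x)) (p - 1),
      mul_le_mul_of_nonneg_left this (abs_nonneg (f x))]
  have h2 := hC x hx
  rw [Real.norm_eq_abs, abs_mul, abs_abs,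
    abs_of_nonneg (Real.rpow_nonneg (abs_nonneg _) _)] at h2
  exact h1.trans h2

lemma hasDerivAt_integral_abs_rpow (μ : Measure ℝ) [IsFiniteMeasure μ]
    (hc : IsCompact (msupport μ)) {p : ℝ} (hp : 1 < p)
    {u v : ℝ → ℝ} (hu : Continuous u) (hv : Continuous v) :
    HasDerivAt (fun t : ℝ => ∫ x, |u x + t * v x| ^ p ∂μ)
      (∫ x, p * Real.sign (u x) * |u x| ^ (p - 1) * v x ∂μ) 0 := by
  have hp0 : (0:ℝ) < p := by linarith
  have hp1 : (0:ℝ) < p - 1 := by linarith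
  have hcont : ∀ t : ℝ, Continuous fun x => u x + t * v x := fun t =>
    hu.add (continuous_const.mul hv)
  have key := hasDerivAt_integral_of_dominated_loc_of_deriv_le (μ := μ) (𝕜 := ℝ)
      (F := fun t x => |u x + t * v x| ^ p)
      (F' := fun t x => p * Real.sign (u x + t * v x) * |u x + t * v x| ^ (p - 1) * v x)
      (x₀ := 0) (bound := fun x => p * |(|u x| + |v x|)| ^ (p - 1) * |v x|)
      (s := Metric.ball 0 1) (Metric.ball_mem_nhds 0 zero_lt_one)
      (Filter.Eventually.of_forall fun t =>
        (((continuous_abs_rpow hp0).comp (hcont t)).aestronglyMeasurable))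
      (integrable_continuous μ hc ((continuous_abs_rpow hp0).comp (hcont 0)))
      (((measurable_const.mul (measurable_realSign.comp (hcont 0).measurable)).mul
          ((continuous_abs_rpow hp1).comp (hcont 0)).measurable).mul
          hv.measurable).aestronglyMeasurable
      ?_
      (integrable_continuous μ hc ((continuous_const.mul
        ((continuous_abs_rpow hp1).comp (hu.abs.add hv.abs))).mul hv.abs))
      ?_
  · obtain ⟨-, hd⟩ := key
    have heq : (fun x => p * Real.sign (u x + 0 * v x) * |u x + 0 * v x| ^ (p - 1) * v x) =
        fun x => p * Real.sign (u x) * |u x| ^ (p - 1) * v x := by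
      funext x; rw [zero_mul, add_zero]
    rwa [heq] at hd
  · refine Filter.Eventually.of_forall fun x => fun t ht => ?_
    have ht1 : |t| ≤ 1 := by
      rw [Metric.mem_ball, Real.dist_eq, sub_zero] at ht
      exact ht.le
    have habs : |u x + t * v x| ≤ |u x| + |v x| := by
      calc |u x + t * v x| ≤ |u x| + |t * v x| := abs_add_le _ _
        _ = |u x| + |t| * |v x| := by rw [abs_mul]
        _ ≤ |u x| + 1 * |v x| := by
            have := mul_le_mul_of_nonneg_right ht1 (abs_nonneg (v x))
            linarith
        _ = |u x| + |v x| := by rw [one_mul]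
    have hr : |u x + t * v x| ^ (p - 1) ≤ (|u x| + |v x|) ^ (p - 1) :=
      Real.rpow_le_rpow (abs_nonneg _) habs hp1.le
    have hrn : (0:ℝ) ≤ |u x + t * v x| ^ (p - 1) := Real.rpow_nonneg (abs_nonneg _) _
    have hs := abs_realSign_le (u x + t * v x)
    rw [Real.norm_eq_abs, abs_mul, abs_mul, abs_mul,
      abs_of_nonneg hrn, abs_of_nonneg hp0.le,
      abs_of_nonneg (by positivity : (0:ℝ) ≤ |u x| + |v x|)]
    calc p * |Real.sign (u x + t * v x)| * |u x + t * v x| ^ (p - 1) * |v x|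
        ≤ p * 1 * |u x + t * v x| ^ (p - 1) * |v x| := by gcongr
      _ = p * |u x + t * v x| ^ (p - 1) * |v x| := by ring
      _ ≤ p * (|u x| + |v x|) ^ (p - 1) * |v x| := by gcongr
  · refine Filter.Eventually.of_forall fun x => fun t _ => ?_
    have hinner : HasDerivAt (fun s : ℝ => u x + s * v x) (v x) t := by
      simpa using ((hasDerivAt_id t).mul_const (v x)).const_add (u x)
    have houter := hasDerivAt_abs_rpow_sign hp (u x + t * v x)
    exact houter.comp t hinner


lemma eval_iter_deriv_add_smul (L Q : Polynomial ℝ) (t : ℝ) (k : ℕ) (x : ℝ) :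
    (derivative^[k] (L + t • Q)).eval x =
      (derivative^[k] L).eval x + t * (derivative^[k] Q).eval x := by
  rw [iterate_map_add derivative k L (t • Q), Polynomial.iterate_derivative_smul,
    Polynomial.eval_add, Polynomial.eval_smul, smul_eq_mul]

theorem stmt_5
    (p : ℝ) (hp : 1 < p) (m : ℕ)
    (μ : ℕ → Measure ℝ) (hfin : ∀ k ≤ m, IsFiniteMeasure (μ k))
    (hc : ∀ k ≤ m, IsCompact (msupport (μ k)))
    (h0inf : (msupport (μ 0)).Infinite)
    (n : ℕ) (L : Polynomial ℝ) (hmonic : L.Monic) (hdeg : L.natDegree = n) :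
    IsExtremalM p m μ n L ↔
      ∀ Q : Polynomial ℝ, Q.degree < (n : WithBot ℕ) →
        (∑ k ∈ Finset.range (m + 1),
          ∫ x, (derivative^[k] Q).eval x * Real.sign ((derivative^[k] L).eval x) *
            |(derivative^[k] L).eval x| ^ (p - 1) ∂(μ k)) = 0 := by
  have hp0 : (0:ℝ) < p := by linarith
  set Φ : Polynomial ℝ → ℝ := fun f =>
    ∑ k ∈ Finset.range (m + 1), ∫ x, |(derivative^[k] f).eval x| ^ p ∂(μ k) with hΦ
  have hΦ_nonneg : ∀ f, 0 ≤ Φ f := fun f =>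
    Finset.sum_nonneg fun k _ => integral_nonneg fun x => Real.rpow_nonneg (abs_nonneg _) _
  have hsob : ∀ f g : Polynomial ℝ, (sobNormM p m μ f ≤ sobNormM p m μ g ↔ Φ f ≤ Φ g) := by
    intro f g
    unfold sobNormM
    exact Real.rpow_le_rpow_iff (hΦ_nonneg f) (hΦ_nonneg g) (by positivity)
  have hLdeg : L.degree = (n : WithBot ℕ) := by
    rw [Polynomial.degree_eq_natDegree hmonic.ne_zero, hdeg]
  constructor
  · rintro ⟨-, -, hmin⟩ Q hQdeg
    have hterm : ∀ k ∈ Finset.range (m + 1),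
        HasDerivAt (fun t : ℝ => ∫ x,
            |(derivative^[k] L).eval x + t * (derivative^[k] Q).eval x| ^ p ∂(μ k))
          (∫ x, p * Real.sign ((derivative^[k] L).eval x) *
            |(derivative^[k] L).eval x| ^ (p - 1) * (derivative^[k] Q).eval x ∂(μ k)) 0 := by
      intro k hk
      have hk' : k ≤ m := Nat.lt_succ_iff.mp (Finset.mem_range.1 hk)
      haveI := hfin k hk'
      exact hasDerivAt_integral_abs_rpow (μ k) (hc k hk') hp
        (Polynomial.continuous _) (Polynomial.continuous _)
    have hφ := HasDerivAt.fun_sum hterm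
    have hφeq : (fun t : ℝ => ∑ k ∈ Finset.range (m + 1), ∫ x,
        |(derivative^[k] L).eval x + t * (derivative^[k] Q).eval x| ^ p ∂(μ k)) =
        fun t => Φ (L + t • Q) := by
      funext t
      simp only [hΦ, eval_iter_deriv_add_smul]
    rw [hφeq] at hφ
    have hmin0 : ∀ t : ℝ, Φ L ≤ Φ (L + t • Q) := by
      intro t
      have hdlt : (t • Q).degree < L.degree :=
        lt_of_le_of_lt (Polynomial.degree_smul_le t Q) (hLdeg ▸ hQdeg)
      have hm : (L + t • Q).Monic := hmonic.add_of_left hdlt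
      have hnd : (L + t • Q).natDegree = n := by
        have hd2 : (L + t • Q).degree = (n : WithBot ℕ) := by
          rw [Polynomial.degree_add_eq_left_of_degree_lt hdlt, hLdeg]
        exact Polynomial.natDegree_eq_of_degree_eq_some hd2
      exact (hsob L _).1 (hmin _ hm hnd)
    have hlm : IsLocalMin (fun t : ℝ => Φ (L + t • Q)) 0 := by
      apply Filter.Eventually.of_forall
      intro t
      simpa using hmin0 t
    have hzero := hlm.hasDerivAt_eq_zero hφ
    have hrw : ∀ k ∈ Finset.range (m + 1),
        (∫ x, p * Real.sign ((derivative^[k] L).eval x) *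
          |(derivative^[k] L).eval x| ^ (p - 1) * (derivative^[k] Q).eval x ∂(μ k)) =
        p * ∫ x, (derivative^[k] Q).eval x * Real.sign ((derivative^[k] L).eval x) *
          |(derivative^[k] L).eval x| ^ (p - 1) ∂(μ k) := by
      intro k hk
      rw [← MeasureTheory.integral_const_mul]
      congr 1
      funext x
      ring
    rw [Finset.sum_congr rfl hrw, ← Finset.mul_sum] at hzero
    exact (mul_eq_zero.1 hzero).resolve_left (ne_of_gt hp0)
  · intro hcond
    refine ⟨hmonic, hdeg, ?_⟩
    intro Q hQm hQd
    have hQdeg : Q.degree = (n : WithBot ℕ) := by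
      rw [Polynomial.degree_eq_natDegree hQm.ne_zero, hQd]
    by_cases hQL : Q = L
    · rw [hQL]
    have hsubdeg : (Q - L).degree < (n : WithBot ℕ) := by
      rw [← hQdeg]
      exact Polynomial.degree_sub_lt (hQdeg.trans hLdeg.symm) hQm.ne_zero
        (by rw [hQm.leadingCoeff, hmonic.leadingCoeff])
    have hS := hcond (Q - L) hsubdeg
    rw [hsob]
    have hk_ineq : ∀ k ∈ Finset.range (m + 1),
        (∫ x, |(derivative^[k] L).eval x| ^ p ∂(μ k)) +
          p * (∫ x, (derivative^[k] (Q - L)).eval x *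
            Real.sign ((derivative^[k] L).eval x) *
            |(derivative^[k] L).eval x| ^ (p - 1) ∂(μ k))
          ≤ ∫ x, |(derivative^[k] Q).eval x| ^ p ∂(μ k) := by
      intro k hk
      have hk' : k ≤ m := Nat.lt_succ_iff.mp (Finset.mem_range.1 hk)
      haveI := hfin k hk'
      have hint1 : Integrable (fun x => |(derivative^[k] L).eval x| ^ p) (μ k) :=
        integrable_continuous _ (hc k hk')
          ((continuous_abs_rpow hp0).comp (Polynomial.continuous _))
      have hint2 : Integrable (fun x => (p * (derivative^[k] (Q - L)).eval x) *
          Real.sign ((derivative^[k] L).eval x) *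
          |(derivative^[k] L).eval x| ^ (p - 1)) (μ k) :=
        integrable_sign_term _ (hc k hk') hp
          (continuous_const.mul (Polynomial.continuous _)) (Polynomial.continuous _)
      have hint3 : Integrable (fun x => |(derivative^[k] Q).eval x| ^ p) (μ k) :=
        integrable_continuous _ (hc k hk')
          ((continuous_abs_rpow hp0).comp (Polynomial.continuous _))
      have hpt : ∀ x, |(derivative^[k] L).eval x| ^ p +
          (p * (derivative^[k] (Q - L)).eval x) *
            Real.sign ((derivative^[k] L).eval x) *
            |(derivative^[k] L).eval x| ^ (p - 1)
          ≤ |(derivative^[k] Q).eval x| ^ p := by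
        intro x
        have hkey := abs_rpow_convex_ineq hp ((derivative^[k] L).eval x)
          ((derivative^[k] Q).eval x)
        have he : (derivative^[k] (Q - L)).eval x =
            (derivative^[k] Q).eval x - (derivative^[k] L).eval x := by
          rw [Polynomial.iterate_derivative_sub, Polynomial.eval_sub]
        rw [he]
        calc |(derivative^[k] L).eval x| ^ p +
            (p * ((derivative^[k] Q).eval x - (derivative^[k] L).eval x)) *
              Real.sign ((derivative^[k] L).eval x) *
              |(derivative^[k] L).eval x| ^ (p - 1)
            = |(derivative^[k] L).eval x| ^ p +
              p * Real.sign ((derivative^[k] L).eval x) *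
              |(derivative^[k] L).eval x| ^ (p - 1) *
              ((derivative^[k] Q).eval x - (derivative^[k] L).eval x) := by ring
          _ ≤ |(derivative^[k] Q).eval x| ^ p := hkey
      have hmono := integral_mono (hint1.add hint2) hint3 hpt
      simp only [Pi.add_apply] at hmono
      rw [integral_add hint1 hint2] at hmono
      have hconst : (∫ x, (p * (derivative^[k] (Q - L)).eval x) *
          Real.sign ((derivative^[k] L).eval x) *
          |(derivative^[k] L).eval x| ^ (p - 1) ∂(μ k)) =
          p * ∫ x, (derivative^[k] (Q - L)).eval x *
            Real.sign ((derivative^[k] L).eval x) *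
            |(derivative^[k] L).eval x| ^ (p - 1) ∂(μ k) := by
        rw [← MeasureTheory.integral_const_mul]
        congr 1
        funext x
        ring
      rw [hconst] at hmono
      exact hmono
    have hsum := Finset.sum_le_sum hk_ineq
    rw [Finset.sum_add_distrib, ← Finset.mul_sum, hS, mul_zero, add_zero] at hsum
    exact hsum
end

section
/- For every n ≥ 1, the n-th monic Sobolev extremal polynomial L_n has at least one real zero of odd multiplicity lying in the interior of the convex hull of supp μ₀. -/
open MeasureTheory Polynomial Set

lemma odd_root_of_sign_change : ∀ (N : ℕ) (f : Polynomial ℝ), f.natDegree ≤ N →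
    ∀ x y : ℝ, x < y → f.eval x * f.eval y < 0 →
    ∃ z ∈ Set.Ioo x y, Odd (rootMultiplicity z f) := by
  intro N
  induction N with
  | zero =>
    intro f hf x y _ hsign
    rw [Nat.le_zero] at hf
    obtain ⟨a, rfl⟩ := (Polynomial.natDegree_eq_zero).mp hf
    simp only [eval_C] at hsign
    nlinarith [mul_self_nonneg a]
  | succ N ih =>
    intro f hf x y hxy hsign
    have hfx : f.eval x ≠ 0 := fun h => by simp [h] at hsign
    have hfy : f.eval y ≠ 0 := fun h => by simp [h] at hsign
    have hf0 : f ≠ 0 := fun h => by simp [h] at hsign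
    have hcont : ContinuousOn (fun t => f.eval t) (Set.Icc x y) :=
      (f.continuous).continuousOn
    obtain ⟨z, hz, hz0⟩ : ∃ z ∈ Set.Ioo x y, f.eval z = 0 := by
      rcases lt_or_gt_of_ne hfx with hx0 | hx0
      · have hy0 : 0 < f.eval y := by nlinarith
        obtain ⟨z, hz, hz0⟩ := intermediate_value_Ioo hxy.le hcont ⟨hx0, hy0⟩
        exact ⟨z, hz, hz0⟩
      · have hy0 : f.eval y < 0 := by nlinarith
        obtain ⟨z, hz, hz0⟩ := intermediate_value_Ioo' hxy.le hcont ⟨hy0, hx0⟩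
        exact ⟨z, hz, hz0⟩
    set mz := rootMultiplicity z f with hmz
    by_cases hodd : Odd mz
    · exact ⟨z, hz, hodd⟩
    have heven : Even mz := Nat.not_odd_iff_even.mp hodd
    have hm1 : 0 < mz := (rootMultiplicity_pos hf0).mpr hz0
    set g := f /ₘ (X - C z) ^ mz with hg
    have hfg : (X - C z) ^ mz * g = f := pow_mul_divByMonic_rootMultiplicity_eq f z
    have hgz : g.eval z ≠ 0 := eval_divByMonic_pow_rootMultiplicity_ne_zero z hf0
    have hg0 : g ≠ 0 := fun h => hgz (by simp [h])
    have hdeg : f.natDegree = mz + g.natDegree := by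
      conv_lhs => rw [← hfg]
      rw [natDegree_mul (pow_ne_zero _ (X_sub_C_ne_zero z)) hg0, natDegree_pow,
        natDegree_X_sub_C, mul_one]
    have hgN : g.natDegree ≤ N := by omega
    have hxz : x ≠ z := fun h => hfx (h ▸ hz0)
    have hyz : y ≠ z := fun h => hfy (h ▸ hz0)
    have hA : 0 < (x - z) ^ mz := heven.pow_pos (sub_ne_zero.mpr hxz)
    have hB : 0 < (y - z) ^ mz := heven.pow_pos (sub_ne_zero.mpr hyz)
    have hevalx : f.eval x = (x - z) ^ mz * g.eval x := by
      conv_lhs => rw [← hfg]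
      simp [eval_pow]
    have hevaly : f.eval y = (y - z) ^ mz * g.eval y := by
      conv_lhs => rw [← hfg]
      simp [eval_pow]
    have hgsign : g.eval x * g.eval y < 0 := by
      rw [hevalx, hevaly] at hsign
      nlinarith [mul_pos hA hB]
    obtain ⟨w, hw, hwodd⟩ := ih g hgN x y hxy hgsign
    have hwz : w ≠ z := by
      rintro rfl
      rw [rootMultiplicity_eq_zero hgz] at hwodd
      simp [Nat.odd_iff] at hwodd
    refine ⟨w, hw, ?_⟩
    have : rootMultiplicity w f = rootMultiplicity w ((X - C z) ^ mz) + rootMultiplicity w g := by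
      conv_lhs => rw [← hfg]
      exact rootMultiplicity_mul (by rw [hfg]; exact hf0)
    rw [this, rootMultiplicity_eq_zero, zero_add]
    · exact hwodd
    · intro hroot
      have : (w - z) ^ mz = 0 := by simpa [eval_pow] using hroot
      exact (pow_ne_zero _ (sub_ne_zero.mpr hwz)) this

set_option maxHeartbeats 2000000

theorem stmt_8
    (p : ℝ) (hp : 1 < p) (m : ℕ)
    (μ : ℕ → Measure ℝ) (hfin : ∀ k ≤ m, IsFiniteMeasure (μ k))
    (hc : ∀ k ≤ m, IsCompact (msupport (μ k)))
    (h0inf : (msupport (μ 0)).Infinite)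
    (n : ℕ) (hn : 1 ≤ n)
    (L : Polynomial ℝ) (hL : IsExtremalM p m μ n L) :
    ∃ x ∈ interior (convexHull ℝ (msupport (μ 0))), Odd (rootMultiplicity x L) := by
  by_contra hcon
  push_neg at hcon
  haveI : IsFiniteMeasure (μ 0) := hfin 0 (Nat.zero_le m)
  have hK : IsCompact (msupport (μ 0)) := hc 0 (Nat.zero_le m)
  have hKne : (msupport (μ 0)).Nonempty := h0inf.nonempty
  set K := msupport (μ 0) with hKdef
  set a := sInf K with ha
  set b := sSup K with hb
  have haK : a ∈ K := hK.sInf_mem hKne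
  have hbK : b ∈ K := hK.sSup_mem hKne
  have hKsub : K ⊆ Icc a b := fun x hx => ⟨csInf_le hK.bddBelow hx, le_csSup hK.bddAbove hx⟩
  have hab : a < b := by
    obtain ⟨x, hx, y, hy, hxy⟩ := h0inf.nontrivial
    rcases eq_or_lt_of_le (le_trans (hKsub hx).1 (hKsub hx).2 : a ≤ b) with h | h
    · refine absurd ?_ hxy
      have h1 := hKsub hx; have h2 := hKsub hy
      rw [mem_Icc] at h1 h2
      linarith [h1.1, h1.2, h2.1, h2.2]
    · exact h
  have hIcc_sub : Icc a b ⊆ convexHull ℝ K := by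
    rw [← segment_eq_Icc hab.le]
    exact (convex_convexHull ℝ K).segment_subset (subset_convexHull ℝ K haK)
      (subset_convexHull ℝ K hbK)
  have hIoo_sub : Ioo a b ⊆ interior (convexHull ℝ K) := by
    rw [← interior_Icc]; exact interior_mono hIcc_sub
  have hno : ∀ x ∈ Ioo a b, ¬ Odd (rootMultiplicity x L) := fun x hx => hcon x (hIoo_sub hx)
  -- sign constancy
  have key : ∀ x y : ℝ, x ∈ Ioo a b → y ∈ Ioo a b → ¬(L.eval x * L.eval y < 0) := by
    intro x y hx hy hlt
    rcases lt_trichotomy x y with h | h | h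
    · obtain ⟨z, hz, hodd⟩ := odd_root_of_sign_change L.natDegree L le_rfl x y h hlt
      exact hno z ⟨lt_trans hx.1 hz.1, lt_trans hz.2 hy.2⟩ hodd
    · subst h; nlinarith [mul_self_nonneg (L.eval x)]
    · obtain ⟨z, hz, hodd⟩ := odd_root_of_sign_change L.natDegree L le_rfl y x h
        (by linarith [hlt, mul_comm (L.eval x) (L.eval y)] : L.eval y * L.eval x < 0)
      exact hno z ⟨lt_trans hy.1 hz.1, lt_trans hz.2 hx.2⟩ hodd
  have hclosure : ∀ σ : ℝ, (∀ x ∈ Ioo a b, 0 ≤ σ * L.eval x) →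
      ∀ x ∈ Icc a b, 0 ≤ σ * L.eval x := by
    intro σ h x hx
    have hxcl : x ∈ closure (Ioo a b) := by rwa [closure_Ioo hab.ne]
    have hcl : IsClosed {t : ℝ | 0 ≤ σ * L.eval t} :=
      isClosed_le continuous_const (continuous_const.mul L.continuous)
    exact hcl.closure_subset_iff.mpr (fun t ht => h t ht) hxcl
  obtain ⟨σ, hσ1, hσL⟩ : ∃ σ : ℝ, (σ = 1 ∨ σ = -1) ∧ ∀ x ∈ Icc a b, 0 ≤ σ * L.eval x := by
    by_cases hpos : ∀ x ∈ Ioo a b, 0 ≤ L.eval x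
    · exact ⟨1, Or.inl rfl, hclosure 1 (by simpa using hpos)⟩
    · push_neg at hpos
      obtain ⟨x₁, hx₁, hx₁neg⟩ := hpos
      refine ⟨-1, Or.inr rfl, hclosure (-1) ?_⟩
      intro x hx
      rcases le_or_gt (L.eval x) 0 with h | h
      · linarith
      · exact absurd (mul_neg_of_neg_of_pos hx₁neg h) (fun hh => key x₁ x hx₁ hx hh)
  -- point of positivity
  have hLne : L ≠ 0 := hL.1.ne_zero
  have hroots : {x : ℝ | L.IsRoot x}.Finite := finite_setOf_isRoot hLne
  obtain ⟨x₀, hx₀⟩ := (h0inf.diff hroots).nonempty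
  have hx₀K : x₀ ∈ K := hx₀.1
  have hLx₀ : L.eval x₀ ≠ 0 := hx₀.2
  have hσne : σ ≠ 0 := by rcases hσ1 with rfl | rfl <;> norm_num
  set c := σ * L.eval x₀ with hcdef
  have hc : 0 < c :=
    lt_of_le_of_ne (hσL x₀ (hKsub hx₀K)) (Ne.symm (mul_ne_zero hσne hLx₀))
  -- ball
  have hcontσ : Continuous fun t : ℝ => σ * L.eval t := continuous_const.mul L.continuous
  obtain ⟨δ, hδ, hball⟩ : ∃ δ > 0, ∀ t ∈ Metric.ball x₀ δ, c / 2 < σ * L.eval t := by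
    have := Metric.continuousAt_iff.mp (hcontσ.continuousAt (x := x₀)) (c / 2) (by linarith)
    obtain ⟨δ, hδ, h⟩ := this
    refine ⟨δ, hδ, fun t ht => ?_⟩
    have := h (Metric.mem_ball.mp ht)
    rw [Real.dist_eq, abs_lt] at this
    simp only [← hcdef] at this
    linarith [this.1]
  set U := Metric.ball x₀ δ with hUdef
  have hUopen : IsOpen U := Metric.isOpen_ball
  have hUmeas : MeasurableSet U := hUopen.measurableSet
  have hU0 : 0 < μ 0 U := hx₀K U hUopen (Metric.mem_ball_self hδ)
  -- measure facts
  have hKc : μ 0 Kᶜ = 0 := by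
    apply measure_null_of_locally_null
    intro x hx
    have hx' : ¬ ∀ V : Set ℝ, IsOpen V → x ∈ V → 0 < μ 0 V := hx
    push_neg at hx'
    obtain ⟨V, hVopen, hxV, hV⟩ := hx'
    exact ⟨V, mem_nhdsWithin_of_mem_nhds (hVopen.mem_nhds hxV),
      le_antisymm hV zero_le⟩
  have hsc : μ 0 (Icc a b)ᶜ = 0 := measure_mono_null (compl_subset_compl.mpr hKsub) hKc
  have hres : (μ 0).restrict (Icc a b) = μ 0 :=
    Measure.restrict_eq_self_of_ae_mem (by
      rw [MeasureTheory.ae_iff]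
      have : {x : ℝ | ¬ x ∈ Icc a b} = (Icc a b)ᶜ := rfl
      rw [this]; exact hsc)
  have hUIcc : μ 0 (U ∩ Icc a b) = μ 0 U := by
    refine le_antisymm (measure_mono inter_subset_left) ?_
    calc μ 0 U ≤ μ 0 (U ∩ Icc a b) + μ 0 (U \ Icc a b) := measure_le_inter_add_diff _ _ _
      _ ≤ μ 0 (U ∩ Icc a b) + 0 := by
          gcongr
          exact le_of_eq (measure_mono_null (fun x (hx : x ∈ U \ Icc a b) => hx.2) hsc)
      _ = μ 0 (U ∩ Icc a b) := add_zero _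
  have hp1 : (0:ℝ) < p - 1 := by linarith
  obtain ⟨M, hM, hMdef⟩ : ∃ M : ℝ, 0 < M ∧ M = (μ 0 Set.univ).toReal :=
    ⟨_, ENNReal.toReal_pos
      (ne_of_gt (lt_of_lt_of_le hU0 (measure_mono (subset_univ _)))) (measure_ne_top _ _), rfl⟩
  obtain ⟨ρ, hρ, hρdef⟩ : ∃ ρ : ℝ, 0 < ρ ∧ ρ = (μ 0 U).toReal :=
    ⟨_, ENNReal.toReal_pos hU0.ne' (measure_ne_top _ _), rfl⟩
  obtain ⟨C₁, hC₁, hC₁def⟩ : ∃ C₁ : ℝ, 0 < C₁ ∧ C₁ = p * (c / 4) ^ (p - 1) :=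
    ⟨_, mul_pos (by linarith) (Real.rpow_pos_of_pos (by linarith) _), rfl⟩
  obtain ⟨t, ht, htc, ht_small⟩ :
      ∃ t : ℝ, 0 < t ∧ t ≤ c / 4 ∧ t ^ (p - 1) * M < C₁ * ρ := by
    set A := C₁ * ρ / (2 * M) with hAdef
    have hA : 0 < A := by positivity
    set r := A ^ (1 / (p - 1)) with hrdef
    have hr : 0 < r := Real.rpow_pos_of_pos hA _
    refine ⟨min (c / 4) r, lt_min (by linarith) hr, min_le_left _ _, ?_⟩
    have ht0 : (0:ℝ) ≤ min (c / 4) r := le_of_lt (lt_min (by linarith) hr)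
    have h1 : (min (c / 4) r) ^ (p - 1) ≤ A := by
      calc (min (c / 4) r) ^ (p - 1) ≤ r ^ (p - 1) :=
            Real.rpow_le_rpow ht0 (min_le_right _ _) hp1.le
        _ = A := by
          rw [hrdef, ← Real.rpow_mul hA.le, one_div_mul_cancel hp1.ne', Real.rpow_one]
    have h2 : (min (c / 4) r) ^ (p - 1) * M ≤ A * M :=
      mul_le_mul_of_nonneg_right h1 hM.le
    have h3 : A * M = C₁ * ρ / 2 := by
      rw [hAdef]; field_simp
    nlinarith
  -- the competitor polynomial
  set Q := L + C (-(σ * t)) with hQdef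
  have hdegL : 0 < L.degree := natDegree_pos_iff_degree_pos.mp (by rw [hL.2.1]; omega)
  have hQmonic : Q.Monic := hL.1.add_of_left (lt_of_le_of_lt degree_C_le hdegL)
  have hQdeg : Q.natDegree = n := by rw [hQdef, natDegree_add_C, hL.2.1]
  have hevalQ : ∀ x : ℝ, Q.eval x = L.eval x - σ * t := by
    intro x; rw [hQdef]; simp [sub_eq_add_neg]
  have hp0 : (0:ℝ) ≤ p := by linarith
  have hp1' : (0:ℝ) < 1 / p := by positivity
  have hcontf₀ : Continuous fun x : ℝ => |L.eval x| ^ p :=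
    (continuous_abs.comp L.continuous).rpow_const (fun x => Or.inr hp0)
  have hcontf₁ : Continuous fun x : ℝ => |L.eval x - σ * t| ^ p :=
    (continuous_abs.comp (L.continuous.sub continuous_const)).rpow_const (fun x => Or.inr hp0)
  have hint₀ : IntegrableOn (fun x : ℝ => |L.eval x| ^ p) (Icc a b) (μ 0) :=
    hcontf₀.continuousOn.integrableOn_compact isCompact_Icc
  have hint₁ : IntegrableOn (fun x : ℝ => |L.eval x - σ * t| ^ p) (Icc a b) (μ 0) :=
    hcontf₁.continuousOn.integrableOn_compact isCompact_Icc
  have habs_u : ∀ x : ℝ, |L.eval x| = |σ * L.eval x| := by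
    intro x; rcases hσ1 with rfl | rfl <;> simp [abs_mul]
  have habs_u' : ∀ x : ℝ, |L.eval x - σ * t| = |σ * L.eval x - t| := by
    intro x; rcases hσ1 with rfl | rfl
    · simp
    · rw [show (-1:ℝ) * L.eval x - t = -(L.eval x - -1 * t) by ring, abs_neg]
  have hptwise : ∀ x ∈ Icc a b, |L.eval x - σ * t| ^ p ≤
      |L.eval x| ^ p + t ^ p - U.indicator (fun _ => C₁ * t) x := by
    intro x hx
    rw [habs_u' x, habs_u x]
    have hu0 : 0 ≤ σ * L.eval x := hσL x hx
    set u := σ * L.eval x with hudef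
    rw [abs_of_nonneg hu0]
    have htp : (0:ℝ) ≤ t ^ p := Real.rpow_nonneg ht.le p
    by_cases hxU : x ∈ U
    · have hu_big : c / 2 < u := hball x hxU
      have h4 : c / 4 ≤ u - t := by linarith
      have h4' : (0:ℝ) < u - t := by linarith
      rw [Set.indicator_of_mem hxU]
      rw [abs_of_nonneg (by linarith : (0:ℝ) ≤ u - t)]
      have hb : 1 + p * (t / (u - t)) ≤ (1 + t / (u - t)) ^ p :=
        one_add_mul_self_le_rpow_one_add
          (le_trans (by norm_num) (by positivity : (0:ℝ) ≤ t / (u - t))) hp.le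
      have hmul : (u - t) ^ p * (1 + p * (t / (u - t))) ≤ u ^ p := by
        calc (u - t) ^ p * (1 + p * (t / (u - t)))
            ≤ (u - t) ^ p * (1 + t / (u - t)) ^ p :=
              mul_le_mul_of_nonneg_left hb (Real.rpow_nonneg h4'.le p)
          _ = ((u - t) * (1 + t / (u - t))) ^ p := (Real.mul_rpow h4'.le (by positivity)).symm
          _ = u ^ p := by rw [mul_add, mul_one, mul_div_cancel₀ _ h4'.ne']; ring_nf
      have hsplit : (u - t) ^ p = (u - t) ^ (p - 1) * (u - t) := by
        rw [← Real.rpow_add_one h4'.ne' (p - 1), sub_add_cancel]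
      have hmono : (c / 4) ^ (p - 1) ≤ (u - t) ^ (p - 1) :=
        Real.rpow_le_rpow (by linarith) h4 hp1.le
      have hterm : (u - t) ^ p * (p * (t / (u - t))) = p * t * (u - t) ^ (p - 1) := by
        rw [hsplit]; field_simp
      have hge : C₁ * t ≤ (u - t) ^ p * (p * (t / (u - t))) := by
        rw [hterm, hC₁def]
        calc p * (c / 4) ^ (p - 1) * t = p * t * (c / 4) ^ (p - 1) := by ring
          _ ≤ p * t * (u - t) ^ (p - 1) :=
            mul_le_mul_of_nonneg_left hmono (by positivity)
      nlinarith [hmul, hge, htp]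
    · rw [Set.indicator_of_notMem hxU, sub_zero]
      have hup : (0:ℝ) ≤ u ^ p := Real.rpow_nonneg hu0 p
      rcases le_or_gt t u with h | h
      · rw [abs_of_nonneg (by linarith)]
        have := Real.rpow_le_rpow (by linarith : (0:ℝ) ≤ u - t) (by linarith : u - t ≤ u) hp0
        linarith
      · rw [abs_of_nonpos (by linarith), neg_sub]
        have := Real.rpow_le_rpow (by linarith : (0:ℝ) ≤ t - u) (by linarith : t - u ≤ t) hp0
        linarith
  have hind : Integrable (U.indicator (fun _ => C₁ * t)) ((μ 0).restrict (Icc a b)) :=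
    (integrable_const (C₁ * t)).indicator hUmeas
  have hgint : Integrable
      (fun x => |L.eval x| ^ p + t ^ p - U.indicator (fun _ => C₁ * t) x)
      ((μ 0).restrict (Icc a b)) := (hint₀.add (integrable_const _)).sub hind
  have hIle : (∫ x in Icc a b, |L.eval x - σ * t| ^ p ∂(μ 0)) ≤
      ∫ x in Icc a b, (|L.eval x| ^ p + t ^ p - U.indicator (fun _ => C₁ * t) x) ∂(μ 0) :=
    setIntegral_mono_on hint₁ hgint measurableSet_Icc hptwise
  have hcomp : (∫ x in Icc a b, (|L.eval x| ^ p + t ^ p - U.indicator (fun _ => C₁ * t) x) ∂(μ 0))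
      = (∫ x in Icc a b, |L.eval x| ^ p ∂(μ 0))
        + t ^ p * (μ 0 (Icc a b)).toReal - C₁ * t * ρ := by
    have hadd : Integrable (fun x : ℝ => |L.eval x| ^ p + t ^ p)
        ((μ 0).restrict (Icc a b)) := by exact hint₀.add (integrable_const _)
    rw [integral_sub hadd hind,
      integral_add hint₀ (integrable_const _), integral_const,
      integral_indicator_const _ hUmeas]
    simp only [Measure.real]
    rw [Measure.restrict_apply hUmeas, hUIcc, Measure.restrict_apply_univ]
    simp only [smul_eq_mul, ← hρdef]
    ring
  have hmeasIcc : (μ 0 (Icc a b)).toReal ≤ M := by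
    rw [hMdef]
    exact ENNReal.toReal_mono (measure_ne_top _ _) (measure_mono (subset_univ _))
  have htpM : t ^ p * M < C₁ * t * ρ := by
    have h1 : t ^ p = t ^ (p - 1) * t := by
      rw [← Real.rpow_add_one ht.ne' (p - 1), sub_add_cancel]
    rw [h1]
    calc t ^ (p - 1) * t * M = t ^ (p - 1) * M * t := by ring
      _ < C₁ * ρ * t := mul_lt_mul_of_pos_right ht_small ht
      _ = C₁ * t * ρ := by ring
  have hF : (∫ x, |L.eval x - σ * t| ^ p ∂(μ 0)) < ∫ x, |L.eval x| ^ p ∂(μ 0) := by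
    rw [← hres]
    have h1 : t ^ p * (μ 0 (Icc a b)).toReal ≤ t ^ p * M :=
      mul_le_mul_of_nonneg_left hmeasIcc (Real.rpow_nonneg ht.le p)
    calc (∫ x in Icc a b, |L.eval x - σ * t| ^ p ∂(μ 0)) ≤ _ := hIle
      _ = _ := hcomp
      _ < ∫ x in Icc a b, |L.eval x| ^ p ∂(μ 0) := by linarith
  have hdQ : derivative Q = derivative L := by
    rw [hQdef, derivative_add, derivative_C, add_zero]
  have hsum : (∑ k ∈ Finset.range (m + 1), ∫ x, |(derivative^[k] Q).eval x| ^ p ∂(μ k)) <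
      ∑ k ∈ Finset.range (m + 1), ∫ x, |(derivative^[k] L).eval x| ^ p ∂(μ k) := by
    rw [Finset.sum_range_succ' (fun k => ∫ x, |(derivative^[k] Q).eval x| ^ p ∂(μ k)) m,
      Finset.sum_range_succ' (fun k => ∫ x, |(derivative^[k] L).eval x| ^ p ∂(μ k)) m]
    have hterms : ∀ k ∈ Finset.range m,
        (∫ x, |(derivative^[k + 1] Q).eval x| ^ p ∂(μ (k + 1)))
        = ∫ x, |(derivative^[k + 1] L).eval x| ^ p ∂(μ (k + 1)) := by
      intro k _
      rw [Function.iterate_succ_apply, Function.iterate_succ_apply, hdQ]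
    rw [Finset.sum_congr rfl hterms]
    simp only [Function.iterate_zero_apply, hevalQ]
    linarith [hF]
  have hS0 : 0 ≤ ∑ k ∈ Finset.range (m + 1), ∫ x, |(derivative^[k] Q).eval x| ^ p ∂(μ k) :=
    Finset.sum_nonneg fun k _ => integral_nonneg fun x => Real.rpow_nonneg (abs_nonneg _) p
  have hle := hL.2.2 Q hQmonic hQdeg
  simp only [sobNormM] at hle
  have hlt := Real.rpow_lt_rpow hS0 hsum hp1'
  linarith
end

section
/- Let I be an interval of the real line and Q a nonconstant polynomial of degree n with real coefficients. Then the number of zeros of Q in I, counted with multiplicity, plus the number of zeros of Q′ in ℂ \ I, counted with multiplicity, is at most n. -/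
open Polynomial Set

open scoped Classical

private lemma sum_count_le' {α : Type*} [DecidableEq α] (m : Multiset α) (F : Finset α) :
    ∑ x ∈ F, m.count x ≤ Multiset.card m := by
  calc ∑ x ∈ F, m.count x = ∑ x ∈ F ∩ m.toFinset, m.count x := by
        refine (Finset.sum_subset Finset.inter_subset_left ?_).symm
        intro x hxF hx
        rw [Multiset.count_eq_zero]
        exact fun hmem => hx (Finset.mem_inter.2 ⟨hxF, Multiset.mem_toFinset.2 hmem⟩)
    _ ≤ ∑ x ∈ m.toFinset, m.count x :=
        Finset.sum_le_sum_of_subset Finset.inter_subset_right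
    _ = Multiset.card m := m.toFinset_sum_count_eq

private lemma interleave' (I : Set ℝ) (hI : I.OrdConnected) (p : ℝ[X]) (hp : p ≠ 0)
    (hp' : derivative p ≠ 0) :
    (p.roots.toFinset.filter (· ∈ I)).card ≤
      ((derivative p).roots.toFinset.filter (· ∈ I) \ p.roots.toFinset.filter (· ∈ I)).card + 1 := by
  refine Finset.card_le_diff_of_interleaved fun x hx y hy hxy _ => ?_
  rw [Finset.mem_filter, Multiset.mem_toFinset, mem_roots hp] at hx hy
  obtain ⟨z, hz1, hz2⟩ := exists_deriv_eq_zero hxy p.continuousOn (hx.1.trans hy.1.symm)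
  refine ⟨z, Finset.mem_filter.2 ⟨Multiset.mem_toFinset.2 ?_, ?_⟩, hz1⟩
  · rw [mem_roots hp', IsRoot, ← p.deriv]; exact hz2
  · exact hI.out hx.2 hy.2 ⟨hz1.1.le, hz1.2.le⟩

private lemma key' (I : Set ℝ) (hI : I.OrdConnected) (p : ℝ[X]) :
    Multiset.card (p.roots.filter (· ∈ I)) ≤
      Multiset.card ((derivative p).roots.filter (· ∈ I)) + 1 := by
  rcases eq_or_ne (derivative p) 0 with hp' | hp'
  · rw [eq_C_of_derivative_eq_zero hp', roots_C]
    simp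
  have hp : p ≠ 0 := ne_of_apply_ne derivative (by rwa [derivative_zero])
  have card_filter : ∀ m : Multiset ℝ,
      Multiset.card (m.filter (· ∈ I)) = ∑ x ∈ m.toFinset.filter (· ∈ I), m.count x := by
    intro m
    rw [← Multiset.toFinset_sum_count_eq (m.filter (· ∈ I)), Multiset.toFinset_filter]
    exact Finset.sum_congr rfl fun x hx =>
      Multiset.count_filter_of_pos (Finset.mem_filter.1 hx).2
  set s := p.roots.toFinset.filter (· ∈ I) with hs
  set t := (derivative p).roots.toFinset.filter (· ∈ I) with ht
  have hst : s.card ≤ (t \ s).card + 1 := interleave' I hI p hp hp'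
  calc
    Multiset.card (p.roots.filter (· ∈ I)) = ∑ x ∈ s, p.roots.count x := card_filter p.roots
    _ = ∑ x ∈ s, (p.roots.count x - 1 + 1) :=
        (Finset.sum_congr rfl fun x hx => (tsub_add_cancel_of_le (Nat.succ_le_iff.2
          (Multiset.count_pos.2 (Multiset.mem_toFinset.1 (Finset.mem_filter.1 hx).1)))).symm)
    _ = (∑ x ∈ s, (p.rootMultiplicity x - 1)) + s.card := by
        simp only [Finset.sum_add_distrib, Finset.card_eq_sum_ones, count_roots]
    _ ≤ (∑ x ∈ s, (derivative p).rootMultiplicity x) + ((t \ s).card + 1) :=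
        add_le_add (Finset.sum_le_sum fun _ _ =>
          rootMultiplicity_sub_one_le_derivative_rootMultiplicity _ _) hst
    _ ≤ (∑ x ∈ s, (derivative p).roots.count x) +
          ((∑ x ∈ t \ s, (derivative p).roots.count x) + 1) := by
        simp only [← count_roots]
        refine add_le_add_right (add_le_add_left ((Finset.card_eq_sum_ones _).trans_le ?_) _) _
        refine Finset.sum_le_sum fun x hx => Nat.succ_le_iff.2 ?_
        rw [Multiset.count_pos, ← Multiset.mem_toFinset]
        exact (Finset.mem_filter.1 (Finset.mem_sdiff.1 hx).1).1
    _ = (∑ x ∈ s ∪ (t \ s), (derivative p).roots.count x) + 1 := by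
        rw [Finset.sum_union Finset.sdiff_disjoint.symm, add_assoc]
    _ = (∑ x ∈ s ∪ (t \ s), ((derivative p).roots.filter (· ∈ I)).count x) + 1 := by
        congr 1
        refine Finset.sum_congr rfl fun x hx => ?_
        rw [Multiset.count_filter_of_pos]
        rcases Finset.mem_union.1 hx with h | h
        · exact (Finset.mem_filter.1 h).2
        · exact (Finset.mem_filter.1 (Finset.mem_sdiff.1 h).1).2
    _ ≤ Multiset.card ((derivative p).roots.filter (· ∈ I)) + 1 :=
        add_le_add_left (sum_count_le' _ _) 1

theorem stmt_11
    (I : Set ℝ) (hI : I.OrdConnected)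
    (n : ℕ) (hn : 1 ≤ n)
    (Q : Polynomial ℝ) (hdeg : Q.natDegree = n) :
    (Q.roots.filter (fun x => x ∈ I)).card +
      ((derivative (Q.map (algebraMap ℝ ℂ))).roots.filter
        (fun z => z ∉ (fun x : ℝ => (x : ℂ)) '' I)).card ≤ n := by
  have hQ' : derivative Q ≠ 0 := by
    intro h
    have := natDegree_eq_zero_of_derivative_eq_zero h
    omega
  have hmapderiv : derivative (Q.map (algebraMap ℝ ℂ)) = (derivative Q).map (algebraMap ℝ ℂ) :=
    derivative_map Q (algebraMap ℝ ℂ)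
  -- total number of complex roots of the derivative
  have htot : Multiset.card (derivative (Q.map (algebraMap ℝ ℂ))).roots ≤ n - 1 := by
    calc Multiset.card (derivative (Q.map (algebraMap ℝ ℂ))).roots
        ≤ (derivative (Q.map (algebraMap ℝ ℂ))).natDegree := card_roots' _
      _ = (derivative Q).natDegree := by rw [hmapderiv, natDegree_map]
      _ ≤ n - 1 := by
          have := natDegree_derivative_le Q
          omega
  -- real roots of the derivative in I embed into complex roots in the image of I
  have hmaple : (((derivative Q).roots.filter (· ∈ I)).map (fun x : ℝ => (x : ℂ))) ≤
      (derivative (Q.map (algebraMap ℝ ℂ))).roots.filter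
        (fun z => ¬ z ∉ (fun x : ℝ => (x : ℂ)) '' I) := by
    have h1 : ((derivative Q).roots.map (fun x : ℝ => (x : ℂ))) ≤
        (derivative (Q.map (algebraMap ℝ ℂ))).roots := by
      rw [hmapderiv]
      exact map_roots_le_of_injective _ (algebraMap ℝ ℂ).injective
    calc (((derivative Q).roots.filter (· ∈ I)).map (fun x : ℝ => (x : ℂ)))
        = (((derivative Q).roots).map (fun x : ℝ => (x : ℂ))).filter
            (fun z => ¬ z ∉ (fun x : ℝ => (x : ℂ)) '' I) := by
          rw [Multiset.filter_map]
          congr 1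
          refine Multiset.filter_congr fun x _ => ?_
          simp only [Function.comp, not_not]
          exact ⟨fun h => mem_image_of_mem _ h, fun h => by
            obtain ⟨y, hy, hxy⟩ := h
            rwa [← Complex.ofReal_injective hxy]⟩
      _ ≤ _ := Multiset.filter_le_filter _ h1
  have hin : Multiset.card ((derivative Q).roots.filter (· ∈ I)) ≤
      Multiset.card ((derivative (Q.map (algebraMap ℝ ℂ))).roots.filter
        (fun z => ¬ z ∉ (fun x : ℝ => (x : ℂ)) '' I)) := by
    simpa using Multiset.card_le_card hmaple
  have hsplit :
      Multiset.card ((derivative (Q.map (algebraMap ℝ ℂ))).roots.filter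
        (fun z => z ∉ (fun x : ℝ => (x : ℂ)) '' I)) +
      Multiset.card ((derivative (Q.map (algebraMap ℝ ℂ))).roots.filter
        (fun z => ¬ z ∉ (fun x : ℝ => (x : ℂ)) '' I)) =
      Multiset.card (derivative (Q.map (algebraMap ℝ ℂ))).roots := by
    rw [← Multiset.card_add, Multiset.filter_add_not]
  have hkey := key' I hI Q
  omega
end

section
/- All zeros of P_n in ℂ are simple, where P_n is the n-th monic L^p(μ₀)-extremal polynomial. -/
open MeasureTheory Polynomial Set

/-- The `L^p(μ)` norm `‖f‖_{0,p} = (∫ |f|^p dμ)^(1/p)` of a polynomial. -/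
noncomputable def lpNorm (p : ℝ) (μ : Measure ℝ) (f : Polynomial ℝ) : ℝ :=
  (∫ x, |f.eval x| ^ p ∂μ) ^ (1 / p)

lemma integrable_of_continuous (μ : Measure ℝ) [IsFiniteMeasure μ]
    (hc : IsCompact (msupport μ)) (g : ℝ → ℝ) (hg : Continuous g) : Integrable g μ := by
  obtain ⟨M, hM⟩ : ∃ M, ∀ x ∈ msupport μ, ‖g x‖ ≤ M := by
    rcases (hc.image (continuous_norm.comp hg)).bddAbove with ⟨M, hM⟩
    exact ⟨M, fun x hx => hM ⟨x, hx, rfl⟩⟩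
  have hae : ∀ᵐ x ∂μ, x ∈ msupport μ := by
    rw [ae_iff]
    exact msupport_compl_null μ
  exact (integrable_const M).mono' hg.aestronglyMeasurable
    (hae.mono fun x hx => hM x hx)

lemma dvd_of_map_dvd' (q P : Polynomial ℝ) (hq : q.Monic)
    (h : q.map (algebraMap ℝ ℂ) ∣ P.map (algebraMap ℝ ℂ)) : q ∣ P := by
  have hinj : Function.Injective (algebraMap ℝ ℂ) := (algebraMap ℝ ℂ).injective
  have h0 : P.map (algebraMap ℝ ℂ) %ₘ q.map (algebraMap ℝ ℂ) = 0 :=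
    (Polynomial.modByMonic_eq_zero_iff_dvd (hq.map _)).mpr h
  rw [← Polynomial.map_modByMonic _ hq] at h0
  exact (Polynomial.modByMonic_eq_zero_iff_dvd hq).mp ((Polynomial.map_eq_zero_iff hinj).mp h0)

theorem stmt_12
    (p : ℝ) (hp : 1 < p)
    (μ0 : Measure ℝ) [IsFiniteMeasure μ0]
    (h0c : IsCompact (msupport μ0)) (h0inf : (msupport μ0).Infinite)
    (n : ℕ) (P : Polynomial ℝ) (hmonic : P.Monic) (hdeg : P.natDegree = n)
    (hextremal : ∀ Q : Polynomial ℝ, Q.Monic → Q.natDegree = n →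
      lpNorm p μ0 P ≤ lpNorm p μ0 Q) :
    ∀ z : ℂ, (P.map (algebraMap ℝ ℂ)).IsRoot z →
      rootMultiplicity z (P.map (algebraMap ℝ ℂ)) = 1 := by
  intro z hroot
  have hp0 : (0:ℝ) < p := by linarith
  have hPne : P ≠ 0 := hmonic.ne_zero
  have hmapne : P.map (algebraMap ℝ ℂ) ≠ 0 := (hmonic.map _).ne_zero
  have h1 : 0 < rootMultiplicity z (P.map (algebraMap ℝ ℂ)) :=
    (rootMultiplicity_pos hmapne).mpr hroot
  by_contra hne
  have h2 : 2 ≤ rootMultiplicity z (P.map (algebraMap ℝ ℂ)) := by omega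
  have hdvd2 : (X - C z) ^ 2 ∣ P.map (algebraMap ℝ ℂ) :=
    dvd_trans (pow_dvd_pow _ h2) (pow_rootMultiplicity_dvd _ z)
  -- obtain a monic real polynomial q of positive degree with q ^ 2 ∣ P
  obtain ⟨q, hqmonic, hqdeg, hqdvd⟩ :
      ∃ q : Polynomial ℝ, q.Monic ∧ 0 < q.natDegree ∧ q ^ 2 ∣ P := by
    rcases eq_or_ne z.im 0 with him | him
    · refine ⟨X - C z.re, monic_X_sub_C _, by simp, ?_⟩
      apply dvd_of_map_dvd' _ _ ((monic_X_sub_C _).pow 2)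
      have hz : ((z.re : ℂ)) = z := Complex.ext rfl (by simp [him])
      simpa [Polynomial.map_pow, Polynomial.map_sub, hz] using hdvd2
    · set w := (starRingEnd ℂ) z with hw
      have hconjmap : (P.map (algebraMap ℝ ℂ)).map (starRingEnd ℂ) = P.map (algebraMap ℝ ℂ) := by
        rw [Polynomial.map_map]
        congr 1
        ext r
        simp
      have hdvd2' : (X - C w) ^ 2 ∣ P.map (algebraMap ℝ ℂ) := by
        have h3 := Polynomial.map_dvd (starRingEnd ℂ) hdvd2
        simpa [hconjmap, Polynomial.map_pow] using h3
      have hcop : IsCoprime (X - C z : Polynomial ℂ) (X - C w) := by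
        apply isCoprime_X_sub_C_of_isUnit_sub
        refine IsUnit.mk0 _ ?_
        rw [sub_ne_zero]
        intro h
        exact him (Complex.conj_eq_iff_im.mp h.symm)
      have hmul : ((X - C z) * (X - C w)) ^ 2 ∣ P.map (algebraMap ℝ ℂ) := by
        rw [mul_pow]
        exact ((hcop.pow).mul_dvd hdvd2 hdvd2')
      have hqmap : ((X - C z.re) ^ 2 + C (z.im ^ 2) : Polynomial ℝ).map (algebraMap ℝ ℂ) =
          (X - C z) * (X - C w) := by
        have hz : z = (z.re : ℂ) + (z.im : ℂ) * Complex.I := (Complex.re_add_im z).symm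
        have hwz : w = (z.re : ℂ) - (z.im : ℂ) * Complex.I := by
          rw [hw]
          apply Complex.ext <;> simp
        have hCI : (C Complex.I) ^ 2 = (-1 : Polynomial ℂ) := by
          rw [← map_pow, Complex.I_sq, map_neg, map_one]
        have hCz : C z = C ((z.re : ℂ)) + C ((z.im : ℂ)) * C Complex.I := by
          rw [← map_mul, ← map_add, ← hz]
        have hCw : C w = C ((z.re : ℂ)) - C ((z.im : ℂ)) * C Complex.I := by
          rw [← map_mul, ← map_sub, ← hwz]
        rw [Polynomial.map_add, Polynomial.map_pow, Polynomial.map_sub, Polynomial.map_X,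
          Polynomial.map_C, Polynomial.map_C, hCz, hCw]
        simp only [Complex.coe_algebraMap, Complex.ofReal_pow, map_pow]
        linear_combination (C ((z.im : ℂ))) ^ 2 * hCI
      have hdegC : degree (C (z.im ^ 2) : Polynomial ℝ) < degree ((X - C z.re) ^ 2) := by
        have h4 : degree ((X - C z.re : Polynomial ℝ) ^ 2) = 2 := by
          rw [degree_pow, degree_X_sub_C]
          rfl
        refine lt_of_le_of_lt (degree_C_le) ?_
        rw [h4]
        norm_num
      have hqm : ((X - C z.re) ^ 2 + C (z.im ^ 2) : Polynomial ℝ).Monic :=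
        ((monic_X_sub_C _).pow 2).add_of_left hdegC
      refine ⟨(X - C z.re) ^ 2 + C (z.im ^ 2), hqm, ?_, ?_⟩
      · have h5 : degree ((X - C z.re) ^ 2 + C (z.im ^ 2) : Polynomial ℝ) = ((2:ℕ) : WithBot ℕ) := by
          rw [degree_add_eq_left_of_degree_lt hdegC, degree_pow, degree_X_sub_C]
          rfl
        have h6 : ((X - C z.re) ^ 2 + C (z.im ^ 2) : Polynomial ℝ).natDegree = 2 :=
          natDegree_eq_of_degree_eq_some h5
        omega
      · apply dvd_of_map_dvd' _ _ (hqm.pow 2)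
        rw [Polynomial.map_pow, hqmap]
        exact hmul
  obtain ⟨T, hPT⟩ := hqdvd
  have hq2ne : q ^ 2 ≠ 0 := pow_ne_zero 2 hqmonic.ne_zero
  have hTne : T ≠ 0 := by
    rintro rfl
    exact hPne (by rw [hPT, mul_zero])
  have hTmonic : T.Monic := Monic.of_mul_monic_left (hqmonic.pow 2) (hPT ▸ hmonic)
  have hdegT : T.natDegree < P.natDegree := by
    have hmuld : (q ^ 2 * T).natDegree = (q ^ 2).natDegree + T.natDegree :=
      Polynomial.natDegree_mul hq2ne hTne
    have hq2d : (q ^ 2).natDegree = 2 * q.natDegree := by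
      rw [natDegree_pow]
    rw [← hPT] at hmuld
    omega
  -- the analytic part
  set a : ℝ → ℝ := fun x => (q.eval x) ^ 2 with ha
  set s : ℝ → ℝ := fun x => T.eval x with hs
  have ha0 : ∀ x, 0 ≤ a x := fun x => sq_nonneg _
  have heval : ∀ (t : ℝ) (x : ℝ), (P + C t * T).eval x = (a x + t) * s x := by
    intro t x
    simp only [hPT, eval_add, eval_mul, eval_C, eval_pow, ha, hs]
    ring
  have hacont : Continuous a := (q.continuous).pow 2
  have hscont : Continuous s := T.continuous
  set G : ℝ → ℝ → ℝ := fun t x => |(a x + t) * s x| ^ p with hGdef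
  set D : ℝ → ℝ := fun x => |s x| ^ p * (p * |a x| ^ (p - 2) * a x) with hDdef
  have hGcont : ∀ t, Continuous (G t) := by
    intro t
    apply Continuous.rpow_const
    · exact ((hacont.add continuous_const).mul hscont).abs
    · intro x
      exact Or.inr hp0.le
  have hGderiv : ∀ (x t : ℝ), HasDerivAt (fun t => G t x)
      (|s x| ^ p * (p * |a x + t| ^ (p - 2) * (a x + t))) t := by
    intro x t
    have h1 : HasDerivAt (fun t : ℝ => |a x + t| ^ p)
        ((p * |a x + t| ^ (p - 2) * (a x + t)) * 1) t :=
      (hasDerivAt_abs_rpow (a x + t) hp).comp t ((hasDerivAt_id t).const_add (a x))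
    have h2 := h1.const_mul (|s x| ^ p)
    have hfeq : (fun t : ℝ => G t x) = fun t : ℝ => |s x| ^ p * |a x + t| ^ p := by
      funext u
      simp only [hGdef]
      rw [abs_mul, Real.mul_rpow (abs_nonneg _) (abs_nonneg _), mul_comm]
    rw [hfeq]
    simpa using h2
  set bound : ℝ → ℝ := fun x => p * (a x + 1) ^ (p - 1) * |s x| ^ p with hbdef
  have habs_pow : ∀ u : ℝ, |u| ^ (p - 2) * |u| = |u| ^ (p - 1) := by
    intro u
    rcases eq_or_ne u 0 with rfl | hu
    · simp [Real.zero_rpow (by linarith : p - (1:ℝ) ≠ 0)]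
    · have h3 : (0:ℝ) < |u| := abs_pos.mpr hu
      calc |u| ^ (p - 2) * |u| = |u| ^ (p - 2) * |u| ^ (1:ℝ) := by rw [Real.rpow_one]
        _ = |u| ^ (p - 2 + 1) := (Real.rpow_add h3 _ _).symm
        _ = |u| ^ (p - 1) := by congr 1; ring
  have hlip : ∀ x : ℝ, LipschitzOnWith (Real.nnabs (bound x)) (fun t => G t x)
      (Metric.ball (0:ℝ) 1) := by
    intro x
    apply (convex_ball (0:ℝ) 1).lipschitzOnWith_of_nnnorm_hasDerivWithin_le
      (f' := fun t => |s x| ^ p * (p * |a x + t| ^ (p - 2) * (a x + t)))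
      (fun t _ => (hGderiv x t).hasDerivWithinAt)
    intro t ht
    rw [← NNReal.coe_le_coe, coe_nnnorm, Real.coe_nnabs, Real.norm_eq_abs]
    have htb : |t| < 1 := by
      simpa [Real.dist_eq] using Metric.mem_ball.mp ht
    have haux : |a x + t| ≤ a x + 1 := by
      rw [abs_le]
      constructor
      · nlinarith [ha0 x, abs_le.mp htb.le]
      · nlinarith [abs_le.mp htb.le]
    have h5 : |a x + t| ^ (p - 1) ≤ (a x + 1) ^ (p - 1) :=
      Real.rpow_le_rpow (abs_nonneg _) haux (by linarith)
    have h6 : |(|s x| ^ p * (p * |a x + t| ^ (p - 2) * (a x + t)))|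
        = |s x| ^ p * (p * (|a x + t| ^ (p - 2) * |a x + t|)) := by
      rw [abs_mul, abs_mul, abs_mul]
      rw [abs_of_nonneg (Real.rpow_nonneg (abs_nonneg _) p),
        abs_of_nonneg (Real.rpow_nonneg (abs_nonneg _) (p - 2)),
        abs_of_nonneg hp0.le]
      ring
    rw [h6, habs_pow]
    have hb : |bound x| = bound x := by
      rw [abs_of_nonneg]
      apply mul_nonneg (mul_nonneg hp0.le (Real.rpow_nonneg (by nlinarith [ha0 x]) _))
        (Real.rpow_nonneg (abs_nonneg _) _)
    rw [hb]
    simp only [hbdef]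
    have hs0 : 0 ≤ |s x| ^ p := Real.rpow_nonneg (abs_nonneg _) _
    calc |s x| ^ p * (p * |a x + t| ^ (p - 1)) ≤ |s x| ^ p * (p * (a x + 1) ^ (p - 1)) := by
          apply mul_le_mul_of_nonneg_left _ hs0
          exact mul_le_mul_of_nonneg_left h5 hp0.le
      _ = p * (a x + 1) ^ (p - 1) * |s x| ^ p := by ring
  have hboundcont : Continuous bound := by
    apply Continuous.mul
    · apply Continuous.mul continuous_const
      apply Continuous.rpow_const (hacont.add continuous_const)
      intro x
      exact Or.inl (show a x + 1 ≠ 0 by nlinarith [ha0 x])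
    · apply Continuous.rpow_const hscont.abs
      intro x
      exact Or.inr hp0.le
  have hDmeas : AEStronglyMeasurable D μ0 := by
    apply Measurable.aestronglyMeasurable
    apply Measurable.mul
    · exact (hscont.abs.measurable).pow_const p
    · apply Measurable.mul
      · exact ((hacont.abs.measurable).pow_const (p - 2)).const_mul p
      · exact hacont.measurable
  have key := hasDerivAt_integral_of_dominated_loc_of_lip (μ := μ0) (x₀ := (0:ℝ))
      (F := G) (F' := D) (bound := bound) (s := Metric.ball (0:ℝ) 1) (Metric.ball_mem_nhds (0:ℝ) one_pos)
      (Filter.Eventually.of_forall fun t => (hGcont t).aestronglyMeasurable)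
      (integrable_of_continuous μ0 h0c _ (hGcont 0))
      hDmeas
      (Filter.Eventually.of_forall hlip)
      (integrable_of_continuous μ0 h0c _ hboundcont)
      (Filter.Eventually.of_forall fun x => by simpa using hGderiv x 0)
  obtain ⟨hDint, hFderiv⟩ := key
  -- 0 is a global minimum of t ↦ ∫ G t
  have hmin : ∀ t : ℝ, (∫ x, G 0 x ∂μ0) ≤ ∫ x, G t x ∂μ0 := by
    intro t
    have hCt : degree (C t * T) ≤ degree T := by
      calc degree (C t * T) ≤ degree (C t) + degree T := degree_mul_le _ _
        _ ≤ 0 + degree T := add_le_add degree_C_le le_rfl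
        _ = degree T := zero_add _
    have hlt : degree (C t * T) < degree P :=
      lt_of_le_of_lt hCt (degree_lt_degree hdegT)
    have hQmonic : (P + C t * T).Monic := hmonic.add_of_left hlt
    have hQdeg : (P + C t * T).natDegree = n := by
      rw [← hdeg]
      exact natDegree_eq_of_degree_eq (degree_add_eq_left_of_degree_lt hlt)
    have hext := hextremal _ hQmonic hQdeg
    unfold _root_.lpNorm at hext
    have hA : (∫ x, |P.eval x| ^ p ∂μ0) = ∫ x, G 0 x ∂μ0 := by
      congr 1
      funext x
      have hPx : P.eval x = a x * s x := by
        simp only [hPT, eval_mul, eval_pow, ha, hs]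
      simp only [hGdef, add_zero, hPx]
    have hB : (∫ x, |(P + C t * T).eval x| ^ p ∂μ0) = ∫ x, G t x ∂μ0 := by
      congr 1
      funext x
      rw [heval t x]
    rw [hA, hB] at hext
    by_contra hlt'
    push_neg at hlt'
    have hnn : 0 ≤ ∫ x, G t x ∂μ0 :=
      integral_nonneg fun x => Real.rpow_nonneg (abs_nonneg _) _
    have := Real.rpow_lt_rpow hnn hlt' (by positivity : (0:ℝ) < 1 / p)
    linarith
  have hlocmin : IsLocalMin (fun t => ∫ x, G t x ∂μ0) 0 :=
    Filter.Eventually.of_forall hmin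
  have hzero : (∫ x, D x ∂μ0) = 0 := hlocmin.hasDerivAt_eq_zero hFderiv
  have hDnonneg : ∀ x, 0 ≤ D x := by
    intro x
    simp only [hDdef]
    apply mul_nonneg (Real.rpow_nonneg (abs_nonneg _) _)
    apply mul_nonneg (mul_nonneg hp0.le (Real.rpow_nonneg (abs_nonneg _) _)) (ha0 x)
  have hae0 : ∀ᵐ x ∂μ0, D x = 0 := by
    have := (integral_eq_zero_iff_of_nonneg hDnonneg hDint).mp hzero
    filter_upwards [this] with x hx
    exact hx
  have hDzero : ∀ x, D x = 0 ↔ P.eval x = 0 := by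
    intro x
    have hPx : P.eval x = a x * s x := by
      simp only [hPT, eval_mul, eval_pow, ha, hs]
    rw [hPx]
    simp only [hDdef]
    rcases eq_or_lt_of_le (ha0 x) with hax | hax
    · simp [← hax]
    · constructor
      · intro h
        rcases mul_eq_zero.mp h with h' | h'
        · have hsx : s x = 0 := by
            by_contra hsx
            have : (0:ℝ) < |s x| ^ p := Real.rpow_pos_of_pos (abs_pos.mpr hsx) p
            linarith [this.ne' h']
          rw [hsx, mul_zero]
        · exfalso
          have hpos : (0:ℝ) < p * |a x| ^ (p - 2) * a x := by
            apply mul_pos (mul_pos hp0 _) hax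
            exact Real.rpow_pos_of_pos (abs_pos.mpr hax.ne') _
          linarith [hpos.ne' h']
      · intro h
        rcases mul_eq_zero.mp h with h' | h'
        · exact absurd h' hax.ne'
        · rw [h']
          simp [Real.zero_rpow hp0.ne']
  have hU : IsOpen {x : ℝ | P.eval x ≠ 0} := by
    have : Continuous fun x => P.eval x := P.continuous
    exact isOpen_compl_singleton.preimage this
  have hUnull : μ0 {x : ℝ | P.eval x ≠ 0} = 0 := by
    have := ae_iff.mp hae0
    convert this using 2
    ext x
    simp [hDzero x]
  have hsub : msupport μ0 ⊆ {x : ℝ | P.eval x = 0} := by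
    intro x hx
    by_contra h
    have := hx _ hU h
    rw [hUnull] at this
    exact lt_irrefl 0 this
  have hfin : ({x : ℝ | P.eval x = 0}).Finite := by
    have := Polynomial.finite_setOf_isRoot hPne
    exact this
  exact h0inf (hfin.subset hsub)
end
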